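/- Let A be a Hermitian n×n matrix, fix u ∈ ℝ, and let R(v) = (A − (u+iv)I)^{-1}. Then for every diagonal index j and every s ≥ 1 and v > 0: |R_{jj}(u + iv/s)| ≤ s·|R_{jj}(u + iv)|. -/

import Mathlib

open Complex Finset

lemma aux_ne (dd : ℝ) (t : ℝ) (ht : t ≠ 0) : (dd : ℂ) - (t:ℂ) * I ≠ 0 := by
  intro h
  have := congrArg Complex.im h
  simp at this
  exact ht this

lemma aux_deriv (c dd : ℂ) (t : ℝ) (hne : dd - (t:ℂ) * I ≠ 0) :
    HasDerivAt (fun t : ℝ => c / (dd - (t:ℂ) * I)) (c * I / (dd - (t:ℂ) * I)^2) t := by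
  have h1 : HasDerivAt (fun t : ℝ => dd - (t:ℂ) * I) (-(1 * I)) t :=
    (Complex.ofRealCLM.hasDerivAt.mul_const I).const_sub dd
  have := (hasDerivAt_const t c).fun_div h1 hne
  refine this.congr_deriv ?_
  ring

lemma key (m : ℕ) (p d : Fin m → ℝ) (hp : ∀ k, 0 ≤ p k)
    (s v : ℝ) (hs : 1 ≤ s) (hv : 0 < v) :
    ‖∑ k, (p k : ℂ) / ((d k : ℂ) - ((v/s : ℝ):ℂ) * I)‖ ≤
      s * ‖∑ k, (p k : ℂ) / ((d k : ℂ) - ((v:ℝ):ℂ) * I)‖ := by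
  have hs0 : 0 < s := lt_of_lt_of_le one_pos hs
  set f : ℝ → ℂ := fun t => ∑ k, (p k : ℂ) / ((d k : ℂ) - (t:ℂ) * I) with hfdef
  set f1 : ℝ → ℂ := fun t => ∑ k, (p k : ℂ) * I / ((d k : ℂ) - (t:ℂ) * I)^2 with hf1def
  have hderiv : ∀ t : ℝ, 0 < t → HasDerivAt f (f1 t) t := by
    intro t ht
    exact HasDerivAt.fun_sum fun k _ => aux_deriv _ _ t (aux_ne _ _ ht.ne')
  have hns : ∀ (k : Fin m) (t : ℝ), Complex.normSq ((d k : ℂ) - (t:ℂ) * I) = (d k)^2 + t^2 := by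
    intro k t
    simp [Complex.normSq_apply]
    ring
  have hbound : ∀ t : ℝ, 0 < t → ‖f1 t‖ * t ≤ (f t).im := by
    intro t ht
    have h1 : ‖f1 t‖ ≤ ∑ k, p k / ((d k)^2 + t^2) := by
      refine le_trans (norm_sum_le _ _) (le_of_eq (Finset.sum_congr rfl fun k _ => ?_))
      rw [norm_div, norm_mul, norm_pow, Complex.norm_I, mul_one, Complex.norm_real, Real.norm_eq_abs,
        _root_.abs_of_nonneg (hp k), Complex.sq_norm, hns]
    have h2 : (f t).im = ∑ k, p k * t / ((d k)^2 + t^2) := by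
      rw [hfdef]
      simp only [Complex.im_sum, Complex.div_im]
      refine Finset.sum_congr rfl fun k _ => ?_
      simp [hns]
      ring
    rw [h2]
    calc ‖f1 t‖ * t ≤ (∑ k, p k / ((d k)^2 + t^2)) * t := by
          apply mul_le_mul_of_nonneg_right h1 ht.le
      _ = ∑ k, p k * t / ((d k)^2 + t^2) := by
          rw [Finset.sum_mul]; exact Finset.sum_congr rfl fun k _ => by ring
  have hNg : ∀ t : ℝ, (f t * (starRingEnd ℂ) (f t)).re = ‖f t‖^2 := by
    intro t
    rw [Complex.mul_conj, Complex.ofReal_re, ← Complex.sq_norm]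
  set g : ℝ → ℝ := fun t => t^2 * (f t * (starRingEnd ℂ) (f t)).re with hgdef
  set G : ℝ → ℝ := fun t => 2 * t * (f t * (starRingEnd ℂ) (f t)).re
    + t^2 * (f1 t * (starRingEnd ℂ) (f t) + f t * (starRingEnd ℂ) (f1 t)).re with hGdef
  have hgderiv : ∀ t : ℝ, 0 < t → HasDerivAt g (G t) t := by
    intro t ht
    have hf' := hderiv t ht
    have hconj : HasDerivAt (fun t => (starRingEnd ℂ) (f t)) ((starRingEnd ℂ) (f1 t)) t := by
      exact hf'.star
    have hmul := hf'.mul hconj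
    have hre : HasDerivAt (fun t => (f t * (starRingEnd ℂ) (f t)).re)
        ((f1 t * (starRingEnd ℂ) (f t) + f t * (starRingEnd ℂ) (f1 t)).re) t :=
      Complex.reCLM.hasFDerivAt.comp_hasDerivAt t hmul
    have hsq : HasDerivAt (fun t : ℝ => t^2) (2*t) t := by
      simpa using hasDerivAt_pow 2 t
    exact hsq.mul hre
  have hGnonneg : ∀ t : ℝ, 0 < t → 0 ≤ G t := by
    intro t ht
    have h1 : (f1 t * (starRingEnd ℂ) (f t) + f t * (starRingEnd ℂ) (f1 t)).re
        = 2 * (f1 t * (starRingEnd ℂ) (f t)).re := by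
      have : f t * (starRingEnd ℂ) (f1 t) = (starRingEnd ℂ) (f1 t * (starRingEnd ℂ) (f t)) := by
        rw [_root_.map_mul]; simp [mul_comm]
      rw [this, Complex.add_re, Complex.conj_re]; ring
    have h2 : -(‖f t‖ * ‖f1 t‖) ≤ (f1 t * (starRingEnd ℂ) (f t)).re := by
      refine le_trans ?_ (neg_abs_le _)
      rw [neg_le_neg_iff]
      calc |(f1 t * (starRingEnd ℂ) (f t)).re| ≤ ‖f1 t * (starRingEnd ℂ) (f t)‖ :=
            Complex.abs_re_le_norm _
        _ = ‖f t‖ * ‖f1 t‖ := by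
            rw [norm_mul, Complex.norm_conj]; ring
    have h3 : ‖f1 t‖ * t ≤ ‖f t‖ :=
      le_trans (hbound t ht) (Complex.im_le_norm _)
    rw [hGdef]
    simp only
    rw [h1, hNg]
    nlinarith [mul_le_mul_of_nonneg_left h3
        (mul_nonneg (mul_nonneg (by norm_num : (0:ℝ) ≤ 2) ht.le) (norm_nonneg (f t))),
      mul_le_mul_of_nonneg_left h2 (mul_nonneg (by norm_num : (0:ℝ) ≤ 2) (sq_nonneg t))]
  have hvs : 0 < v / s := div_pos hv hs0
  have hle : v / s ≤ v := by
    rw [div_le_iff₀ hs0]; nlinarith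
  have hmono : MonotoneOn g (Set.Icc (v/s) v) := by
    apply monotoneOn_of_deriv_nonneg (convex_Icc _ _)
    · intro x hx
      exact ((hgderiv x (lt_of_lt_of_le hvs hx.1)).continuousAt).continuousWithinAt
    · intro x hx
      rw [interior_Icc] at hx
      exact ((hgderiv x (lt_of_lt_of_le hvs hx.1.le)).differentiableAt).differentiableWithinAt
    · intro x hx
      rw [interior_Icc] at hx
      have hx0 : 0 < x := lt_of_lt_of_le hvs hx.1.le
      rw [(hgderiv x hx0).deriv]
      exact hGnonneg x hx0
  have hgg : g (v/s) ≤ g v := hmono ⟨le_refl _, hle⟩ ⟨hle, le_refl _⟩ hle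
  have h5 : (v/s * ‖f (v/s)‖)^2 ≤ (v * ‖f v‖)^2 := by
    have e1 : g (v/s) = (v/s)^2 * ‖f (v/s)‖^2 := by rw [hgdef]; simp only [hNg]
    have e2 : g v = v^2 * ‖f v‖^2 := by rw [hgdef]; simp only [hNg]
    rw [mul_pow, mul_pow]
    rw [e1, e2] at hgg
    exact hgg
  have h6 : v/s * ‖f (v/s)‖ ≤ v * ‖f v‖ := by
    have hA : 0 ≤ v/s * ‖f (v/s)‖ := mul_nonneg hvs.le (norm_nonneg _)
    have hB : 0 ≤ v * ‖f v‖ := mul_nonneg hv.le (norm_nonneg _)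
    nlinarith
  calc ‖f (v/s)‖ = (s / v) * (v/s * ‖f (v/s)‖) := by
        field_simp
    _ ≤ (s / v) * (v * ‖f v‖) := by
        apply mul_le_mul_of_nonneg_left h6 (div_pos hs0 hv).le
    _ = s * ‖f v‖ := by field_simp
lemma resolvent_diag (n : ℕ) (A : Matrix (Fin n) (Fin n) ℂ) (hA : A.IsHermitian)
    (w : ℂ) (hw : w.im ≠ 0) (j : Fin n) :
    ((A - w • 1)⁻¹) j j
      = ∑ k, (Complex.normSq ((hA.eigenvectorUnitary : Matrix (Fin n) (Fin n) ℂ) j k) : ℂ)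
          / ((hA.eigenvalues k : ℂ) - w) := by
  set U : Matrix (Fin n) (Fin n) ℂ := (hA.eigenvectorUnitary : Matrix (Fin n) (Fin n) ℂ) with hU
  have hUU : U * star U = 1 := (Matrix.mem_unitaryGroup_iff).mp hA.eigenvectorUnitary.2
  have hUU' : star U * U = 1 := (Matrix.mem_unitaryGroup_iff').mp hA.eigenvectorUnitary.2
  have hne : ∀ k, (hA.eigenvalues k : ℂ) - w ≠ 0 := by
    intro k h
    apply hw
    have := congrArg Complex.im h
    simpa using this.symm
  have hdiag : Matrix.diagonal (fun k => (hA.eigenvalues k : ℂ) - w)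
      = Matrix.diagonal (RCLike.ofReal ∘ hA.eigenvalues) - w • (1 : Matrix (Fin n) (Fin n) ℂ) := by
    ext i k
    by_cases h : i = k
    · subst h; simp [Matrix.diagonal_apply_eq, Matrix.one_apply]
    · simp [Matrix.diagonal_apply_ne _ h, Matrix.one_apply, h]
  have hAw : A - w • 1 = U * Matrix.diagonal (fun k => (hA.eigenvalues k : ℂ) - w) * star U := by
    rw [hdiag, Matrix.mul_sub, Matrix.sub_mul, Matrix.mul_smul, Matrix.mul_one, Matrix.smul_mul,
      hUU]
    conv_lhs => rw [hA.spectral_theorem, Unitary.conjStarAlgAut_apply]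
  have hinv : (A - w • 1)⁻¹
      = U * Matrix.diagonal (fun k => ((hA.eigenvalues k : ℂ) - w)⁻¹) * star U := by
    apply Matrix.inv_eq_right_inv
    rw [hAw]
    calc U * Matrix.diagonal (fun k => (hA.eigenvalues k : ℂ) - w) * star U *
          (U * Matrix.diagonal (fun k => ((hA.eigenvalues k : ℂ) - w)⁻¹) * star U)
        = U * (Matrix.diagonal (fun k => (hA.eigenvalues k : ℂ) - w) *
            Matrix.diagonal (fun k => ((hA.eigenvalues k : ℂ) - w)⁻¹)) * star U := by
          rw [Matrix.mul_assoc, Matrix.mul_assoc, Matrix.mul_assoc, ← Matrix.mul_assoc (star U),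
            hUU', Matrix.one_mul, ← Matrix.mul_assoc, ← Matrix.mul_assoc, Matrix.mul_assoc U]
      _ = 1 := by
          rw [Matrix.diagonal_mul_diagonal]
          have : (fun k => ((hA.eigenvalues k : ℂ) - w) * ((hA.eigenvalues k : ℂ) - w)⁻¹)
              = fun _ => (1:ℂ) := by
            funext k; exact mul_inv_cancel₀ (hne k)
          rw [this, Matrix.diagonal_one, Matrix.mul_one, hUU]
  rw [hinv, Matrix.mul_apply]
  refine Finset.sum_congr rfl fun k _ => ?_
  rw [Matrix.mul_diagonal, Matrix.star_eq_conjTranspose, Matrix.conjTranspose_apply, RCLike.star_def]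
  rw [mul_right_comm, Complex.mul_conj]
  rw [div_eq_mul_inv]

/-- For a Hermitian matrix `A`, resolvent `R(w) = (A − wI)⁻¹` at `w = u + iv`,
any `s ≥ 1`, `v > 0`: `|R_{jj}(u + iv/s)| ≤ s·|R_{jj}(u + iv)|`. -/
theorem stmt14 (n : ℕ) (A : Matrix (Fin n) (Fin n) ℂ) (hA : A.IsHermitian)
    (u : ℝ) (j : Fin n) (s v : ℝ) (hs : 1 ≤ s) (hv : 0 < v) :
    ‖((A - ((u : ℂ) + (v / s : ℝ) * Complex.I) • 1)⁻¹) j j‖ ≤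
      s * ‖((A - ((u : ℂ) + (v : ℝ) * Complex.I) • 1)⁻¹) j j‖ := by
  have hs0 : 0 < s := lt_of_lt_of_le one_pos hs
  have him1 : ((u : ℂ) + ((v / s : ℝ) : ℂ) * I).im ≠ 0 := by
    have h : ((u : ℂ) + ((v / s : ℝ) : ℂ) * I).im = v / s := by simp
    rw [h]; exact (div_pos hv hs0).ne'
  have him2 : ((u : ℂ) + ((v : ℝ) : ℂ) * I).im ≠ 0 := by
    have h : ((u : ℂ) + ((v : ℝ) : ℂ) * I).im = v := by simp
    rw [h]; exact hv.ne'
  rw [resolvent_diag n A hA _ him1 j, resolvent_diag n A hA _ him2 j]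
  have hrecast : ∀ t : ℝ,
      (∑ k, (Complex.normSq ((hA.eigenvectorUnitary : Matrix (Fin n) (Fin n) ℂ) j k) : ℂ)
          / ((hA.eigenvalues k : ℂ) - ((u : ℂ) + (t : ℂ) * I)))
      = ∑ k, ((Complex.normSq ((hA.eigenvectorUnitary : Matrix (Fin n) (Fin n) ℂ) j k) : ℝ) : ℂ)
          / (((hA.eigenvalues k - u : ℝ) : ℂ) - (t : ℂ) * I) := by
    intro t
    refine Finset.sum_congr rfl fun k _ => ?_
    congr 1
    push_cast
    ring
  rw [hrecast, hrecast]
  exact key n (fun k => Complex.normSq ((hA.eigenvectorUnitary : Matrix (Fin n) (Fin n) ℂ) j k))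
    (fun k => hA.eigenvalues k - u) (fun k => Complex.normSq_nonneg _) s v hs hv
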